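/- Let g ≥ 0 and let λ_0, λ_1, …, λ_{2g+1} be complex numbers. Then for all complex x and z one has the polynomial identity f_1(x, z) = 2 f(z) + f'(z)(x − z) + (x − z)^2 · ∑_{i=1}^g x^{i−1} ∑_{k=i}^{2g+1−i} (k+1−i) λ_{k+1+i} z^k, where f' denotes the derivative of f. -/

import Mathlib

open Finset

noncomputable def Usum (g : ℕ) (l : ℕ → ℂ) (z : ℂ) (i : ℕ) : ℂ :=
  ∑ k ∈ Finset.Icc i (2 * g + 1 - i), ((k + 1 - i : ℕ) : ℂ) * l (k + 1 + i) * z ^ k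

lemma Usum_eq_range (g : ℕ) (l : ℕ → ℂ) (z : ℂ) (i : ℕ) :
    Usum g l z i =
      ∑ t ∈ Finset.range (2 * g + 2 - 2 * i), ((t : ℂ) + 1) * l (2 * i + 1 + t) * z ^ (i + t) := by
  rw [Usum, ← Finset.Ico_add_one_right_eq_Icc, Finset.sum_Ico_eq_sum_range]
  rcases le_or_gt i (g + 1) with h | h
  · have h1 : 2 * g + 1 - i + 1 - i = 2 * g + 2 - 2 * i := by omega
    rw [h1]
    refine Finset.sum_congr rfl fun t ht => ?_
    have h2 : i + t + 1 - i = t + 1 := by omega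
    have h3 : i + t + 1 + i = 2 * i + 1 + t := by omega
    rw [h2, h3]
    push_cast
    ring
  · have h1 : 2 * g + 1 - i + 1 - i = 0 := by omega
    have h2 : 2 * g + 2 - 2 * i = 0 := by omega
    rw [h1, h2]
    simp

lemma Usum_empty (g : ℕ) (l : ℕ → ℂ) (z : ℂ) (i : ℕ) (h : g + 1 ≤ i) :
    Usum g l z i = 0 := by
  rw [Usum_eq_range]
  have : 2 * g + 2 - 2 * i = 0 := by omega
  rw [this]
  simp

lemma peel2 (F : ℕ → ℂ) (n : ℕ) :
    ∑ t ∈ Finset.range (n + 2), F t = (∑ t ∈ Finset.range n, F (t + 2)) + F 1 + F 0 := by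
  rw [Finset.sum_range_succ', Finset.sum_range_succ']

lemma peel4 (F : ℕ → ℂ) (n : ℕ) :
    ∑ t ∈ Finset.range (n + 4), F t =
      (∑ t ∈ Finset.range n, F (t + 4)) + F 3 + F 2 + F 1 + F 0 := by
  rw [Finset.sum_range_succ', Finset.sum_range_succ', Finset.sum_range_succ',
    Finset.sum_range_succ']

/-- Telescoping identity. -/
lemma tele (g : ℕ) (l : ℕ → ℂ) (hl : ∀ k, 2 * g + 1 < k → l k = 0) (z : ℂ) (m : ℕ)
    (hm : m ≤ g) :
    Usum g l z m - 2 * z * Usum g l z (m + 1) + z ^ 2 * Usum g l z (m + 2) =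
      2 * l (2 * m + 2) * z ^ (m + 1) + l (2 * m + 3) * z ^ (m + 2) + l (2 * m + 1) * z ^ m := by
  have hU0 : Usum g l z m =
      ∑ t ∈ Finset.range (2 * g - 2 * m + 2), ((t : ℂ) + 1) * (l (2 * m + 1 + t) * z ^ (m + t)) := by
    rw [Usum_eq_range, show 2 * g + 2 - 2 * m = 2 * g - 2 * m + 2 from by omega]
    exact Finset.sum_congr rfl fun t _ => by ring
  have hU1 : z * Usum g l z (m + 1) =
      (∑ t ∈ Finset.range (2 * g - 2 * m + 2), ((t : ℂ) - 1) * (l (2 * m + 1 + t) * z ^ (m + t)))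
        + l (2 * m + 1) * z ^ m := by
    rw [Usum_eq_range, Finset.mul_sum, show 2 * g + 2 - 2 * (m + 1) = 2 * g - 2 * m from by omega]
    rw [peel2 (fun t => ((t : ℂ) - 1) * (l (2 * m + 1 + t) * z ^ (m + t))) (2 * g - 2 * m)]
    have hc : ∀ t ∈ Finset.range (2 * g - 2 * m),
        z * (((t : ℂ) + 1) * l (2 * (m + 1) + 1 + t) * z ^ (m + 1 + t)) =
          (((t + 2 : ℕ) : ℂ) - 1) * (l (2 * m + 1 + (t + 2)) * z ^ (m + (t + 2))) := by
      intro t _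
      rw [show 2 * m + 1 + (t + 2) = 2 * (m + 1) + 1 + t from by omega,
        show m + (t + 2) = m + 1 + t + 1 from by omega]
      push_cast
      ring
    rw [Finset.sum_congr rfl hc]
    push_cast
    ring
  have hU2 : z ^ 2 * Usum g l z (m + 2) =
      (∑ t ∈ Finset.range (2 * g - 2 * m + 2), ((t : ℂ) - 3) * (l (2 * m + 1 + t) * z ^ (m + t)))
        + 3 * (l (2 * m + 1) * z ^ m) + 2 * (l (2 * m + 2) * z ^ (m + 1))
        + l (2 * m + 3) * z ^ (m + 2) := by
    rcases Nat.lt_or_ge m g with hlt | hge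
    · rw [Usum_eq_range, Finset.mul_sum,
        show 2 * g + 2 - 2 * (m + 2) = 2 * g - 2 * m - 2 from by omega,
        show 2 * g - 2 * m + 2 = (2 * g - 2 * m - 2) + 4 from by omega,
        peel4 (fun t => ((t : ℂ) - 3) * (l (2 * m + 1 + t) * z ^ (m + t))) (2 * g - 2 * m - 2)]
      have hc : ∀ t ∈ Finset.range (2 * g - 2 * m - 2),
          z ^ 2 * (((t : ℂ) + 1) * l (2 * (m + 2) + 1 + t) * z ^ (m + 2 + t)) =
            (((t + 4 : ℕ) : ℂ) - 3) * (l (2 * m + 1 + (t + 4)) * z ^ (m + (t + 4))) := by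
        intro t _
        rw [show 2 * m + 1 + (t + 4) = 2 * (m + 2) + 1 + t from by omega,
          show m + (t + 4) = (m + 2 + t) + 2 from by omega]
        push_cast
        ring
      rw [Finset.sum_congr rfl hc]
      push_cast
      ring
    · have hmg : m = g := le_antisymm hm hge
      rw [hmg, Usum_empty g l z (g + 2) (by omega),
        show 2 * g - 2 * g + 2 = 0 + 1 + 1 from by omega]
      rw [Finset.sum_range_succ, Finset.sum_range_succ, Finset.sum_range_zero]
      have e1 : l (2 * g + 1 + (0 + 1)) = 0 := hl _ (by omega)
      have e2 : l (2 * g + 1 + 0) = l (2 * g + 1) := by norm_num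
      have e4 : l (2 * g + 3) = 0 := hl _ (by omega)
      rw [e1, e2, e4]
      push_cast
      ring
  have hzero :
      (∑ t ∈ Finset.range (2 * g - 2 * m + 2), ((t : ℂ) + 1) * (l (2 * m + 1 + t) * z ^ (m + t)))
        - 2 * (∑ t ∈ Finset.range (2 * g - 2 * m + 2),
            ((t : ℂ) - 1) * (l (2 * m + 1 + t) * z ^ (m + t)))
        + (∑ t ∈ Finset.range (2 * g - 2 * m + 2),
            ((t : ℂ) - 3) * (l (2 * m + 1 + t) * z ^ (m + t))) = 0 := by
    rw [Finset.mul_sum, ← Finset.sum_sub_distrib, ← Finset.sum_add_distrib]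
    exact Finset.sum_eq_zero fun t _ => by ring
  linear_combination hU0 - 2 * hU1 + hU2 + hzero

/-- Base case. -/
lemma base (g : ℕ) (l : ℕ → ℂ) (hl : ∀ k, 2 * g + 1 < k → l k = 0) (z : ℂ) :
    2 * (∑ k ∈ Finset.range (2 * g + 2), l k * z ^ k) - z * Usum g l z 0
        + z ^ 2 * Usum g l z 1 = 2 * l 0 + l 1 * z := by
  have h1 : z * Usum g l z 0 = ∑ k ∈ Finset.range (2 * g + 2), (k : ℂ) * (l k * z ^ k) :=
    calc z * Usum g l z 0
        = ∑ t ∈ Finset.range (2 * g + 2), ((t + 1 : ℕ) : ℂ) * (l (t + 1) * z ^ (t + 1)) := by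
          rw [Usum_eq_range, Finset.mul_sum, show 2 * g + 2 - 2 * 0 = 2 * g + 2 from by omega]
          refine Finset.sum_congr rfl fun t _ => ?_
          rw [show 2 * 0 + 1 + t = t + 1 from by omega, show (0 : ℕ) + t = t from by omega]
          push_cast
          ring
      _ = ∑ k ∈ Finset.range (2 * g + 2 + 1), (k : ℂ) * (l k * z ^ k) := by
          rw [Finset.sum_range_succ' (fun k => (k : ℂ) * (l k * z ^ k)) (2 * g + 2)]
          push_cast
          ring
      _ = ∑ k ∈ Finset.range (2 * g + 2), (k : ℂ) * (l k * z ^ k) := by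
          rw [Finset.sum_range_succ (fun k => (k : ℂ) * (l k * z ^ k)) (2 * g + 2),
            hl (2 * g + 2) (by omega)]
          push_cast
          ring
  have h2 : z ^ 2 * Usum g l z 1 =
      (∑ k ∈ Finset.range (2 * g + 2), ((k : ℂ) - 2) * (l k * z ^ k))
        + 2 * (l 0 * z ^ 0) + l 1 * z ^ 1 :=
    calc z ^ 2 * Usum g l z 1
        = ∑ t ∈ Finset.range (2 * g), ((t + 1 : ℕ) : ℂ) * (l (t + 1 + 2) * z ^ (t + 1 + 2)) := by
          rw [Usum_eq_range, Finset.mul_sum, show 2 * g + 2 - 2 * 1 = 2 * g from by omega]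
          refine Finset.sum_congr rfl fun t _ => ?_
          rw [show 2 * 1 + 1 + t = t + 1 + 2 from by omega,
            show (1 : ℕ) + t = t + 1 from by omega, show t + 1 + 2 = (t + 1) + 2 from rfl,
            pow_add z (t + 1) 2]
          push_cast
          ring
      _ = ∑ t ∈ Finset.range (2 * g + 1), (t : ℂ) * (l (t + 2) * z ^ (t + 2)) := by
          rw [Finset.sum_range_succ' (fun t => (t : ℂ) * (l (t + 2) * z ^ (t + 2))) (2 * g)]
          push_cast
          ring
      _ = ∑ t ∈ Finset.range (2 * g), (t : ℂ) * (l (t + 2) * z ^ (t + 2)) := by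
          rw [Finset.sum_range_succ (fun t => (t : ℂ) * (l (t + 2) * z ^ (t + 2))) (2 * g),
            hl (2 * g + 2) (by omega)]
          push_cast
          ring
      _ = ∑ t ∈ Finset.range (2 * g), (((t + 2 : ℕ) : ℂ) - 2) * (l (t + 2) * z ^ (t + 2)) :=
          Finset.sum_congr rfl fun t _ => by push_cast; ring
      _ = (∑ k ∈ Finset.range (2 * g + 2), ((k : ℂ) - 2) * (l k * z ^ k))
            + 2 * (l 0 * z ^ 0) + l 1 * z ^ 1 := by
          rw [peel2 (fun k => ((k : ℂ) - 2) * (l k * z ^ k)) (2 * g)]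
          push_cast
          ring
  have hzero : (2 : ℂ) * (∑ k ∈ Finset.range (2 * g + 2), l k * z ^ k)
      - (∑ k ∈ Finset.range (2 * g + 2), (k : ℂ) * (l k * z ^ k))
      + (∑ k ∈ Finset.range (2 * g + 2), ((k : ℂ) - 2) * (l k * z ^ k)) = 0 := by
    rw [Finset.mul_sum, ← Finset.sum_sub_distrib, ← Finset.sum_add_distrib]
    exact Finset.sum_eq_zero fun k _ => by ring
  linear_combination -h1 + h2 + hzero

noncomputable def Acoef (l : ℕ → ℂ) (z : ℂ) : ℕ → ℂ
  | 0 => 2 * l 0 + l 1 * z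
  | (j + 1) => 2 * l (2 * j + 2) * z ^ (j + 1) + l (2 * j + 3) * z ^ (j + 2)
      + l (2 * j + 1) * z ^ j

noncomputable def Ea (l : ℕ → ℂ) (z x : ℂ) (j : ℕ) : ℂ :=
  (2 * l (2 * j) * z ^ j + l (2 * j + 1) * z ^ (j + 1)) * x ^ j

noncomputable def Da (l : ℕ → ℂ) (z x : ℂ) (j : ℕ) : ℂ :=
  l (2 * j + 1) * z ^ j * x ^ (j + 1)

lemma hL (g : ℕ) (l : ℕ → ℂ) (hl : ∀ k, 2 * g + 1 < k → l k = 0) (x z : ℂ) :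
    (∑ i ∈ Finset.range (g + 1), x ^ i * z ^ i * (2 * l (2 * i) + l (2 * i + 1) * (x + z))) =
      ∑ j ∈ Finset.range (g + 2), Acoef l z j * x ^ j := by
  have hlhs : (∑ i ∈ Finset.range (g + 1),
      x ^ i * z ^ i * (2 * l (2 * i) + l (2 * i + 1) * (x + z))) =
      (∑ i ∈ Finset.range (g + 1), Ea l z x i) + ∑ i ∈ Finset.range (g + 1), Da l z x i := by
    rw [← Finset.sum_add_distrib]
    exact Finset.sum_congr rfl fun i _ => by rw [Ea, Da]; ring
  have hterm : ∀ j, Acoef l z (j + 1) * x ^ (j + 1) = Ea l z x (j + 1) + Da l z x j := by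
    intro j
    rw [Acoef, Ea, Da, show 2 * (j + 1) + 1 = 2 * j + 3 from by omega,
      show 2 * (j + 1) = 2 * j + 2 from by omega]
    ring
  have hT : (∑ j ∈ Finset.range (g + 2), Acoef l z j * x ^ j) =
      (∑ j ∈ Finset.range (g + 1), (Ea l z x (j + 1) + Da l z x j)) + Acoef l z 0 := by
    rw [Finset.sum_range_succ' (fun j => Acoef l z j * x ^ j) (g + 1)]
    congr 1
    · exact Finset.sum_congr rfl fun j _ => hterm j
    · rw [Acoef]
      ring
  have e1 : (∑ j ∈ Finset.range (g + 2), Ea l z x j) =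
      (∑ j ∈ Finset.range (g + 1), Ea l z x (j + 1)) + Ea l z x 0 :=
    Finset.sum_range_succ' _ _
  have e2 : (∑ j ∈ Finset.range (g + 2), Ea l z x j) =
      (∑ j ∈ Finset.range (g + 1), Ea l z x j) + Ea l z x (g + 1) :=
    Finset.sum_range_succ _ _
  have e3 : Ea l z x (g + 1) = 0 := by
    rw [Ea, hl (2 * (g + 1)) (by omega), hl (2 * (g + 1) + 1) (by omega)]
    ring
  have e4 : Ea l z x 0 = Acoef l z 0 := by
    rw [Ea, Acoef]
    norm_num
  rw [hlhs, hT, Finset.sum_add_distrib]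
  linear_combination e1 - e2 + e4 - e3

theorem f1_decomposition
    (g : ℕ) (l : ℕ → ℂ) (hl : ∀ k, 2 * g + 1 < k → l k = 0) (x z : ℂ) :
    (∑ i ∈ Finset.range (g + 1), x ^ i * z ^ i * (2 * l (2 * i) + l (2 * i + 1) * (x + z))) =
      2 * (∑ k ∈ Finset.range (2 * g + 2), l k * z ^ k)
        + deriv (fun w : ℂ => ∑ k ∈ Finset.range (2 * g + 2), l k * w ^ k) z * (x - z)
        + (x - z) ^ 2 *
            ∑ i ∈ Finset.Icc 1 g, x ^ (i - 1) *
              ∑ k ∈ Finset.Icc i (2 * g + 1 - i), ((k + 1 - i : ℕ) : ℂ) * l (k + 1 + i) * z ^ k := by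
  -- derivative
  have hderiv : deriv (fun w : ℂ => ∑ k ∈ Finset.range (2 * g + 2), l k * w ^ k) z =
      Usum g l z 0 := by
    have hd : deriv (fun w : ℂ => ∑ k ∈ Finset.range (2 * g + 2), l k * w ^ k) z =
        ∑ k ∈ Finset.range (2 * g + 2), l k * ((k : ℂ) * z ^ (k - 1)) := by
      have h1 : ∀ k ∈ Finset.range (2 * g + 2),
          HasDerivAt (fun w : ℂ => l k * w ^ k) (l k * ((k : ℂ) * z ^ (k - 1))) z :=
        fun k _ => (hasDerivAt_pow k z).const_mul (l k)
      exact (HasDerivAt.fun_sum h1).deriv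
    rw [hd]
    calc (∑ k ∈ Finset.range (2 * g + 2), l k * ((k : ℂ) * z ^ (k - 1)))
        = ∑ k ∈ Finset.range (2 * g + 1 + 1), l k * ((k : ℂ) * z ^ (k - 1)) := by
          rw [show 2 * g + 2 = 2 * g + 1 + 1 from by omega]
      _ = ∑ t ∈ Finset.range (2 * g + 1), l (t + 1) * (((t + 1 : ℕ) : ℂ) * z ^ (t + 1 - 1)) := by
          rw [Finset.sum_range_succ' (fun k => l k * ((k : ℂ) * z ^ (k - 1))) (2 * g + 1)]
          push_cast
          ring
      _ = ∑ t ∈ Finset.range (2 * g + 1), ((t : ℂ) + 1) * l (2 * 0 + 1 + t) * z ^ (0 + t) := by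
          refine Finset.sum_congr rfl fun t _ => ?_
          rw [show t + 1 - 1 = t from by omega, show 2 * 0 + 1 + t = t + 1 from by omega,
            show (0 : ℕ) + t = t from by omega]
          push_cast
          ring
      _ = ∑ t ∈ Finset.range (2 * g + 1 + 1), ((t : ℂ) + 1) * l (2 * 0 + 1 + t) * z ^ (0 + t) := by
          rw [Finset.sum_range_succ (fun t => ((t : ℂ) + 1) * l (2 * 0 + 1 + t) * z ^ (0 + t))
            (2 * g + 1), hl (2 * 0 + 1 + (2 * g + 1)) (by omega)]
          ring
      _ = Usum g l z 0 := by
          rw [Usum_eq_range, show 2 * g + 2 - 2 * 0 = 2 * g + 1 + 1 from by omega]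
  -- the R sum
  have hR : (∑ i ∈ Finset.Icc 1 g, x ^ (i - 1) *
        ∑ k ∈ Finset.Icc i (2 * g + 1 - i), ((k + 1 - i : ℕ) : ℂ) * l (k + 1 + i) * z ^ k) =
      ∑ i ∈ Finset.range g, Usum g l z (i + 1) * x ^ i := by
    rw [← Finset.Ico_add_one_right_eq_Icc, Finset.sum_Ico_eq_sum_range,
      show g + 1 - 1 = g from by omega]
    refine Finset.sum_congr rfl fun i _ => ?_
    rw [show 1 + i = i + 1 from by omega, show i + 1 - 1 = i from by omega, Usum]
    ring
  rw [hderiv, hR]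
  set P := ∑ i ∈ Finset.range g, Usum g l z (i + 1) * x ^ i with hP
  rw [hL g l hl x z]
  have hT : (∑ j ∈ Finset.range (g + 2), Acoef l z j * x ^ j) =
      (∑ j ∈ Finset.range (g + 1),
        (Usum g l z j - 2 * z * Usum g l z (j + 1) + z ^ 2 * Usum g l z (j + 2)) * x ^ (j + 1))
        + Acoef l z 0 := by
    rw [Finset.sum_range_succ' (fun j => Acoef l z j * x ^ j) (g + 1)]
    congr 1
    · refine Finset.sum_congr rfl fun j hj => ?_
      have hj' : j ≤ g := by
        have := Finset.mem_range.mp hj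
        omega
      rw [tele g l hl z j hj', Acoef]
    · rw [pow_zero, mul_one]
  have hsplit : (∑ j ∈ Finset.range (g + 1),
      (Usum g l z j - 2 * z * Usum g l z (j + 1) + z ^ 2 * Usum g l z (j + 2)) * x ^ (j + 1)) =
      (∑ j ∈ Finset.range (g + 1), Usum g l z j * x ^ (j + 1))
        - 2 * z * (∑ j ∈ Finset.range (g + 1), Usum g l z (j + 1) * x ^ (j + 1))
        + z ^ 2 * (∑ j ∈ Finset.range (g + 1), Usum g l z (j + 2) * x ^ (j + 1)) := by
    rw [Finset.mul_sum, Finset.mul_sum, ← Finset.sum_sub_distrib, ← Finset.sum_add_distrib]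
    exact Finset.sum_congr rfl fun j _ => by ring
  have hS1 : (∑ j ∈ Finset.range (g + 1), Usum g l z j * x ^ (j + 1)) =
      x ^ 2 * P + Usum g l z 0 * x := by
    rw [Finset.sum_range_succ' (fun j => Usum g l z j * x ^ (j + 1)) g]
    have h : (∑ j ∈ Finset.range g, Usum g l z (j + 1) * x ^ (j + 1 + 1)) = x ^ 2 * P := by
      rw [hP, Finset.mul_sum]
      exact Finset.sum_congr rfl fun j _ => by ring
    rw [h]
    ring
  have hS2 : (∑ j ∈ Finset.range (g + 1), Usum g l z (j + 1) * x ^ (j + 1)) = x * P := by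
    rw [Finset.sum_range_succ (fun j => Usum g l z (j + 1) * x ^ (j + 1)) g,
      Usum_empty g l z (g + 1) (by omega), hP, Finset.mul_sum]
    rw [zero_mul, add_zero]
    exact Finset.sum_congr rfl fun j _ => by ring
  have hW1 : (∑ j ∈ Finset.range (g + 2), Usum g l z (j + 1) * x ^ j) = P := by
    rw [show g + 2 = g + 1 + 1 from by omega,
      Finset.sum_range_succ (fun j => Usum g l z (j + 1) * x ^ j) (g + 1),
      Finset.sum_range_succ (fun j => Usum g l z (j + 1) * x ^ j) g,
      Usum_empty g l z (g + 1) (by omega), Usum_empty g l z (g + 1 + 1) (by omega), hP]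
    ring
  have hW2 : (∑ j ∈ Finset.range (g + 2), Usum g l z (j + 1) * x ^ j) =
      (∑ j ∈ Finset.range (g + 1), Usum g l z (j + 1 + 1) * x ^ (j + 1)) + Usum g l z 1 := by
    rw [Finset.sum_range_succ' (fun j => Usum g l z (j + 1) * x ^ j) (g + 1)]
    norm_num
  have hS3 : (∑ j ∈ Finset.range (g + 1), Usum g l z (j + 2) * x ^ (j + 1)) =
      P - Usum g l z 1 := by
    have h : (∑ j ∈ Finset.range (g + 1), Usum g l z (j + 2) * x ^ (j + 1)) =
        ∑ j ∈ Finset.range (g + 1), Usum g l z (j + 1 + 1) * x ^ (j + 1) :=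
      Finset.sum_congr rfl fun j _ => by norm_num
    rw [h]
    linear_combination hW1 - hW2
  have hbase := base g l hl z
  have hA0 : Acoef l z 0 = 2 * l 0 + l 1 * z := by rw [Acoef]
  rw [hT, hsplit, hS1, hS2, hS3, hA0]
  linear_combination -hbase
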